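/- For every fixed d with 0 < d < L, the function θ ↦ p_b(d, θ) is strictly increasing on [0, arccos(d/L)] and strictly decreasing on [arccos(d/L), π/2]. (In the paper's Appendix B this follows from the sign of ∂p_b/∂θ, which equals the sign of G(θ) = (L² + d²)·cos θ − d·L·(1 + cos² θ) when d < L.) -/
import Mathlib


/-- Distance from the UAV (at polar coordinates `(d, θ)` relative to Willie) to Bob. -/
noncomputable def db (L d θ : ℝ) : ℝ :=
  Real.sqrt (L ^ 2 + d ^ 2 - 2 * d * L * Real.cos θ)

/-- Elevation angle from Bob to the UAV (in radians). -/
noncomputable def θb (L d θ : ℝ) : ℝ :=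
  Real.arcsin (d * Real.sin θ / db L d θ)

/-- Probability of a LoS component in the UAV-to-Bob channel. -/
noncomputable def pb (a b L d θ : ℝ) : ℝ :=
  1 / (1 + a * Real.exp (-b * ((180 / Real.pi) * θb L d θ - a)))

/-- The objective `f(d, θ) = d_b^{ξ_L} · p_b`. -/
noncomputable def f (a b L ξL d θ : ℝ) : ℝ :=
  db L d θ ^ ξL * pb a b L d θ

section aux

open Real

variable {a b L d θ θ₁ θ₂ : ℝ}

lemma Dpos (hd : 0 < d) (hdL : d < L) (hc : Real.cos θ ≤ 1) :
    0 < L ^ 2 + d ^ 2 - 2 * d * L * Real.cos θ := by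
  nlinarith [sq_nonneg (L - d),
    mul_nonneg (mul_pos hd (hd.trans hdL)).le (by linarith [Real.cos_le_one θ] : (0:ℝ) ≤ 1 - Real.cos θ)]

lemma db_pos (hd : 0 < d) (hdL : d < L) : 0 < db L d θ :=
  Real.sqrt_pos.2 (Dpos hd hdL (Real.cos_le_one θ))

lemma ratio_nonneg (hd : 0 < d) (hs : 0 ≤ Real.sin θ) :
    0 ≤ d * Real.sin θ / db L d θ :=
  div_nonneg (mul_nonneg hd.le hs) (Real.sqrt_nonneg _)

lemma ratio_le_one (hd : 0 < d) (hdL : d < L) (hs : 0 ≤ Real.sin θ) :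
    d * Real.sin θ / db L d θ ≤ 1 := by
  rw [div_le_one (db_pos hd hdL)]
  apply Real.le_sqrt_of_sq_le
  nlinarith [Real.sin_sq_add_cos_sq θ, sq_nonneg (L - d * Real.cos θ)]

lemma ratio_sq (hd : 0 < d) (hdL : d < L) :
    (d * Real.sin θ / db L d θ) ^ 2 =
      (d * Real.sin θ) ^ 2 / (L ^ 2 + d ^ 2 - 2 * d * L * Real.cos θ) := by
  rw [div_pow, db, Real.sq_sqrt (Dpos hd hdL (Real.cos_le_one θ)).le]

/-- From a strict inequality of the ratios, conclude a strict inequality of `pb`. -/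
lemma pb_lt_of_ratio_lt (ha : 0 < a) (hb : 0 < b) (hd : 0 < d) (hdL : d < L)
    (hs₁ : 0 ≤ Real.sin θ₁) (hs₂ : 0 ≤ Real.sin θ₂)
    (hr : d * Real.sin θ₁ / db L d θ₁ < d * Real.sin θ₂ / db L d θ₂) :
    pb a b L d θ₁ < pb a b L d θ₂ := by
  have hθb : θb L d θ₁ < θb L d θ₂ := by
    apply Real.strictMonoOn_arcsin
      ⟨by linarith [ratio_nonneg (L := L) (θ := θ₁) hd hs₁], ratio_le_one hd hdL hs₁⟩
      ⟨by linarith [ratio_nonneg (L := L) (θ := θ₂) hd hs₂], ratio_le_one hd hdL hs₂⟩ hr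
  have hpi : (0:ℝ) < 180 / Real.pi := by positivity
  have hexp : Real.exp (-b * ((180 / Real.pi) * θb L d θ₂ - a)) <
      Real.exp (-b * ((180 / Real.pi) * θb L d θ₁ - a)) := by
    apply Real.exp_lt_exp.2
    have := mul_lt_mul_of_pos_left hθb hpi
    nlinarith
  unfold pb
  have h1 : 0 < 1 + a * Real.exp (-b * ((180 / Real.pi) * θb L d θ₂ - a)) := by positivity
  have h2 : 0 < 1 + a * Real.exp (-b * ((180 / Real.pi) * θb L d θ₁ - a)) := by positivity
  apply one_div_lt_one_div_of_lt h1
  nlinarith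

/-- Algebraic core, decreasing branch: on `[d/L, 1]` the squared-ratio numerator/denominator
comparison. Here `c₂ < c₁`, both in `[d/L, 1]`. -/
lemma alg_dec {c₁ c₂ : ℝ} (hd : 0 < d) (hdL : d < L) (h21 : c₂ < c₁) (hc₁ : c₁ ≤ 1)
    (hc₂ : d ≤ L * c₂) :
    (1 - c₁ ^ 2) * (L ^ 2 + d ^ 2 - 2 * d * L * c₂) <
      (1 - c₂ ^ 2) * (L ^ 2 + d ^ 2 - 2 * d * L * c₁) := by
  have h1 : 0 < L * c₁ - d := by
    have := mul_lt_mul_of_pos_left h21 (hd.trans hdL); linarith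
  have h2 : 0 ≤ L * c₂ - d := by linarith
  have h3 : 0 < L - d * c₂ := by nlinarith
  have h4 : 0 < L - d * c₁ := by nlinarith
  nlinarith [mul_pos (sub_pos.2 h21)
    (add_pos_of_pos_of_nonneg (mul_pos h1 h3) (mul_nonneg h2 h4.le))]

/-- Algebraic core, increasing branch: `c₂ < c₁`, both in `[0, d/L]`. -/
lemma alg_inc {c₁ c₂ : ℝ} (hd : 0 < d) (hdL : d < L) (h21 : c₂ < c₁) (hc₂ : 0 ≤ c₂)
    (hc₁ : L * c₁ ≤ d) :
    (1 - c₂ ^ 2) * (L ^ 2 + d ^ 2 - 2 * d * L * c₁) <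
      (1 - c₁ ^ 2) * (L ^ 2 + d ^ 2 - 2 * d * L * c₂) := by
  have hc₁1 : c₁ < 1 := by nlinarith
  have h1 : L * c₁ - d ≤ 0 := by linarith
  have h2 : L * c₂ - d < 0 := by
    have := mul_lt_mul_of_pos_left h21 (hd.trans hdL); linarith
  have h3 : 0 < L - d * c₂ := by nlinarith
  have h4 : 0 < L - d * c₁ := by nlinarith
  nlinarith [mul_pos (sub_pos.2 h21)
    (add_pos_of_nonneg_of_pos (mul_nonneg (by linarith : 0 ≤ d - L * c₁) h3.le)
      (mul_pos (by linarith : 0 < d - L * c₂) h4))]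

/-- Compare ratios from the comparison of the `h(c)` values. -/
lemma ratio_lt (hd : 0 < d) (hdL : d < L)
    (hs₁ : 0 ≤ Real.sin θ₁) (hs₂ : 0 ≤ Real.sin θ₂)
    (hkey : (1 - Real.cos θ₁ ^ 2) * (L ^ 2 + d ^ 2 - 2 * d * L * Real.cos θ₂) <
      (1 - Real.cos θ₂ ^ 2) * (L ^ 2 + d ^ 2 - 2 * d * L * Real.cos θ₁)) :
    d * Real.sin θ₁ / db L d θ₁ < d * Real.sin θ₂ / db L d θ₂ := by
  have hD₁ := Dpos (θ := θ₁) hd hdL (Real.cos_le_one θ₁)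
  have hD₂ := Dpos (θ := θ₂) hd hdL (Real.cos_le_one θ₂)
  have hsq : (d * Real.sin θ₁ / db L d θ₁) ^ 2 < (d * Real.sin θ₂ / db L d θ₂) ^ 2 := by
    rw [ratio_sq hd hdL, ratio_sq hd hdL, div_lt_div_iff₀ hD₁ hD₂]
    have e₁ : Real.sin θ₁ ^ 2 = 1 - Real.cos θ₁ ^ 2 := by
      linarith [Real.sin_sq_add_cos_sq θ₁]
    have e₂ : Real.sin θ₂ ^ 2 = 1 - Real.cos θ₂ ^ 2 := by
      linarith [Real.sin_sq_add_cos_sq θ₂]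
    rw [mul_pow, mul_pow, e₁, e₂]
    nlinarith [mul_lt_mul_of_pos_left hkey (pow_pos hd 2)]
  have h₁ := ratio_nonneg (L := L) (θ := θ₁) hd hs₁
  have h₂ := ratio_nonneg (L := L) (θ := θ₂) hd hs₂
  by_contra h
  push_neg at h
  exact absurd (pow_le_pow_left₀ h₂ h 2) (not_le.2 hsq)

end aux

/-- For fixed `0 < d < L`, `θ ↦ p_b(d, θ)` is strictly increasing on `[0, arccos(d/L)]`
and strictly decreasing on `[arccos(d/L), π/2]`. -/
theorem stmt_7 (a b L ξL d : ℝ) (ha : 0 < a) (hb : 0 < b) (hL : 0 < L)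
    (hξ : ξL < 0) (hd : 0 < d) (hdL : d < L) :
    StrictMonoOn (fun θ => pb a b L d θ) (Set.Icc 0 (Real.arccos (d / L))) ∧
    StrictAntiOn (fun θ => pb a b L d θ) (Set.Icc (Real.arccos (d / L)) (Real.pi / 2)) := by
  have hdL0 : 0 ≤ d / L := by positivity
  have hdL1 : d / L ≤ 1 := by rw [div_le_one hL]; linarith
  have harccos : Real.arccos (d / L) ≤ Real.pi / 2 := Real.arccos_le_pi_div_two.2 hdL0
  have hcosval : Real.cos (Real.arccos (d / L)) = d / L :=
    Real.cos_arccos (by linarith) hdL1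
  constructor
  · -- strictly increasing on [0, arccos(d/L)]
    intro θ₁ h₁ θ₂ h₂ h12
    have hθ₂pi2 : θ₂ ≤ Real.pi / 2 := h₂.2.trans harccos
    have hs₁ : 0 ≤ Real.sin θ₁ := Real.sin_nonneg_of_nonneg_of_le_pi h₁.1
      (by linarith [Real.pi_pos])
    have hs₂ : 0 ≤ Real.sin θ₂ := Real.sin_nonneg_of_nonneg_of_le_pi h₂.1
      (by linarith [Real.pi_pos])
    -- cos θ₂ < cos θ₁, both ≥ d/L, cos θ₁ ≤ 1
    have hc21 : Real.cos θ₂ < Real.cos θ₁ :=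
      Real.cos_lt_cos_of_nonneg_of_le_pi h₁.1 (by linarith [Real.pi_pos]) h12
    have hc₂ : d / L ≤ Real.cos θ₂ := by
      rw [← hcosval]
      exact Real.cos_le_cos_of_nonneg_of_le_pi (h₁.1.trans h12.le)
        (Real.arccos_le_pi _) h₂.2
    exact pb_lt_of_ratio_lt ha hb hd hdL hs₁ hs₂
      (ratio_lt hd hdL hs₁ hs₂
        (alg_dec hd hdL hc21 (Real.cos_le_one θ₁)
          (by rw [div_le_iff₀ hL] at hc₂; linarith)))
  · -- strictly decreasing on [arccos(d/L), π/2]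
    intro θ₁ h₁ θ₂ h₂ h12
    have hθ₁0 : 0 ≤ θ₁ := (Real.arccos_nonneg _).trans h₁.1
    have hs₁ : 0 ≤ Real.sin θ₁ := Real.sin_nonneg_of_nonneg_of_le_pi hθ₁0
      (by linarith [Real.pi_pos, h₁.2])
    have hs₂ : 0 ≤ Real.sin θ₂ := Real.sin_nonneg_of_nonneg_of_le_pi
      ((Real.arccos_nonneg _).trans h₂.1) (by linarith [Real.pi_pos, h₂.2])
    have hc21 : Real.cos θ₂ < Real.cos θ₁ :=
      Real.cos_lt_cos_of_nonneg_of_le_pi hθ₁0 (by linarith [Real.pi_pos, h₂.2]) h12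
    have hc₁ : Real.cos θ₁ ≤ d / L := by
      rw [← hcosval]
      exact Real.cos_le_cos_of_nonneg_of_le_pi (Real.arccos_nonneg _)
        (by linarith [Real.pi_pos, h₁.2]) h₁.1
    have hc₂0 : 0 ≤ Real.cos θ₂ := Real.cos_nonneg_of_mem_Icc
      ⟨by linarith [(Real.arccos_nonneg (d/L)).trans h₂.1, Real.pi_pos], h₂.2⟩
    exact pb_lt_of_ratio_lt ha hb hd hdL hs₂ hs₁
      (ratio_lt hd hdL hs₂ hs₁
        (alg_inc hd hdL hc21 hc₂0 (by rw [le_div_iff₀ hL] at hc₁; linarith)))
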